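/- arXiv:2002.10821 — 2 statements merged into one kernel-verified Lean document; each statement's English description precedes it below -/
import Mathlib

section
/- Let ρ^n ∈ ℝ^{2M} be nonnegative and suppose ρ̃ ∈ ℝ^{2M} satisfies ρ̃_i = ρ_i^n − (Δt/Δx)(F̃_{i+1/2} − F̃_{i−1/2}) with upwind fluxes F̃_{i+1/2} = ρ̃_i·max(u_{i+1/2},0) + ρ̃_{i+1}·min(u_{i+1/2},0) (and F̃_{1/2} = F̃_{2M+1/2} = 0) for some velocities u. Then ρ̃_i ≥ 0 for all i. -/
private lemma tele_sum (F : ℕ → ℝ) (a : ℕ) :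
    ∀ n : ℕ, ∑ j ∈ Finset.Icc (a + 1) (a + n), (F j - F (j - 1)) = F (a + n) - F a := by
  intro n
  induction n with
  | zero => rw [Finset.Icc_eq_empty (by omega)]; simp
  | succ n ih =>
    rw [show a + (n + 1) = (a + n) + 1 from rfl,
      Finset.sum_Icc_succ_top (by omega), ih]
    simp only [Nat.add_sub_cancel]
    ring

theorem upwind_nonnegativity
    (M : ℕ) (hM : 0 < M) (Δt Δx : ℝ) (hΔt : 0 < Δt) (hΔx : 0 < Δx)
    (ρ ρt : ℕ → ℝ) (u : ℕ → ℝ) (F : ℕ → ℝ)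
    (hρ : ∀ i ∈ Finset.Icc 1 (2 * M), 0 ≤ ρ i)
    (hF0 : F 0 = 0) (hFM : F (2 * M) = 0)
    (hF : ∀ i, 1 ≤ i → i ≤ 2 * M - 1 →
      F i = ρt i * max (u i) 0 + ρt (i + 1) * min (u i) 0)
    (hupd : ∀ i ∈ Finset.Icc 1 (2 * M),
      ρt i = ρ i - (Δt / Δx) * (F i - F (i - 1))) :
    ∀ i ∈ Finset.Icc 1 (2 * M), 0 ≤ ρt i := by
  classical
  by_contra hcon
  push_neg at hcon
  obtain ⟨i0, hi0mem, hi0⟩ := hcon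
  rw [Finset.mem_Icc] at hi0mem
  obtain ⟨hi1, hi2⟩ := hi0mem
  set c : ℝ := Δt / Δx with hc
  have hcpos : 0 < c := div_pos hΔt hΔx
  -- left boundary of the negative cluster
  set p := Nat.findGreatest (fun j => 0 ≤ ρt j) (i0 - 1) with hpdef
  have hple : p ≤ i0 - 1 := Nat.findGreatest_le _
  have hpspec : p ≠ 0 → 0 ≤ ρt p := fun h0 => Nat.findGreatest_of_ne_zero rfl h0
  have hnegL : ∀ j, p < j → j ≤ i0 → ρt j < 0 := by
    intro j hj1 hj2
    rcases eq_or_lt_of_le hj2 with rfl | hlt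
    · exact hi0
    · have : ¬ (0 ≤ ρt j) := Nat.findGreatest_is_greatest hj1 (by omega)
      linarith [lt_of_not_ge this]
  -- right boundary of the cluster
  have hexq : ∃ j, i0 < j ∧ (j = 2 * M + 1 ∨ 0 ≤ ρt j) :=
    ⟨2 * M + 1, by omega, Or.inl rfl⟩
  set q := Nat.find hexq with hqdef
  obtain ⟨hq1, hq2⟩ := Nat.find_spec hexq
  have hqle : q ≤ 2 * M + 1 := Nat.find_min' hexq ⟨by omega, Or.inl rfl⟩
  have hnegR : ∀ j, i0 < j → j < q → ρt j < 0 := by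
    intro j hj1 hj2
    have := Nat.find_min hexq hj2
    push_neg at this
    rcases (this hj1) with ⟨_, h2⟩
    exact h2
  set b := q - 1 with hbdef
  have hbq : b + 1 = q := by omega
  have hb2M : b ≤ 2 * M := by omega
  have hi0b : i0 ≤ b := by omega
  have hpb : p + 1 ≤ b := by omega
  have hb1 : 1 ≤ b := by omega
  -- all cluster entries are negative
  have hcluster : ∀ j ∈ Finset.Icc (p + 1) b, ρt j < 0 := by
    intro j hj
    rw [Finset.mem_Icc] at hj
    rcases le_or_gt j i0 with h | h
    · exact hnegL j (by omega) h
    · exact hnegR j h (by omega)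
  have hsub : ∀ j ∈ Finset.Icc (p + 1) b, j ∈ Finset.Icc 1 (2 * M) := by
    intro j hj; rw [Finset.mem_Icc] at *; omega
  -- flux sign at left boundary
  have hFp : 0 ≤ F p := by
    rcases Nat.eq_zero_or_pos p with h0 | hpos
    · rw [h0, hF0]
    · have hρtp : 0 ≤ ρt p := hpspec (by omega)
      have hρtp1 : ρt (p + 1) < 0 := hcluster (p + 1) (by rw [Finset.mem_Icc]; omega)
      rw [hF p hpos (by omega)]
      have h1 : 0 ≤ ρt p * max (u p) 0 := mul_nonneg hρtp (le_max_right _ _)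
      have h2 : 0 ≤ ρt (p + 1) * min (u p) 0 := by
        have := mul_nonneg (neg_nonneg.2 (le_of_lt hρtp1))
          (neg_nonneg.2 (min_le_right (u p) 0))
        nlinarith
      linarith
  -- flux sign at right boundary
  have hFb : F b ≤ 0 := by
    rcases eq_or_lt_of_le hb2M with h2M | hlt
    · rw [h2M, hFM]
    · have hq2M : q ≤ 2 * M := by omega
      have hρtq : 0 ≤ ρt q := by
        rcases hq2 with h | h
        · omega
        · exact h
      have hρtb : ρt b < 0 := hcluster b (by rw [Finset.mem_Icc]; omega)
      rw [hF b hb1 (by omega)]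
      have h1 : ρt b * max (u b) 0 ≤ 0 :=
        mul_nonpos_of_nonpos_of_nonneg (le_of_lt hρtb) (le_max_right _ _)
      have h2 : ρt (b + 1) * min (u b) 0 ≤ 0 := by
        rw [hbq]
        exact mul_nonpos_of_nonneg_of_nonpos hρtq (min_le_right _ _)
      linarith
  -- telescoping sum over the cluster
  have htel : ∑ j ∈ Finset.Icc (p + 1) b, (F j - F (j - 1)) = F b - F p := by
    have := tele_sum F p (b - p)
    rwa [show p + (b - p) = b from by omega] at this
  have hsum : ∑ j ∈ Finset.Icc (p + 1) b, ρt j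
      = ∑ j ∈ Finset.Icc (p + 1) b, ρ j - c * (F b - F p) := by
    calc ∑ j ∈ Finset.Icc (p + 1) b, ρt j
        = ∑ j ∈ Finset.Icc (p + 1) b, (ρ j - c * (F j - F (j - 1))) :=
          Finset.sum_congr rfl (fun j hj => hupd j (hsub j hj))
      _ = ∑ j ∈ Finset.Icc (p + 1) b, ρ j
            - c * ∑ j ∈ Finset.Icc (p + 1) b, (F j - F (j - 1)) := by
          rw [Finset.sum_sub_distrib, Finset.mul_sum]
      _ = _ := by rw [htel]
  have hne : (Finset.Icc (p + 1) b).Nonempty := ⟨p + 1, by rw [Finset.mem_Icc]; omega⟩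
  have hlt0 : ∑ j ∈ Finset.Icc (p + 1) b, ρt j < 0 := by
    have := Finset.sum_lt_sum_of_nonempty hne (f := ρt) (g := fun _ => (0 : ℝ)) hcluster
    simpa using this
  have hge0 : 0 ≤ ∑ j ∈ Finset.Icc (p + 1) b, ρ j :=
    Finset.sum_nonneg (fun j hj => hρ j (hsub j hj))
  have hflux : c * (F b - F p) ≤ 0 :=
    mul_nonpos_of_nonneg_of_nonpos (le_of_lt hcpos) (by linarith)
  linarith
end

section
/- Let H be C² with lim_{ε→0+} ε·H''(ε) = 0, and define K_ε'(s+δ) via K_ε''(s+δ) = H''(s)/(s+ε). Then lim_{ε→0+} ε·|K_ε'(ε)| = 0, where K_ε'(ε) = K_ε'(1+δ) + ∫_{ε/2}^{1} H''(t)/(t+ε) dt is evaluated with δ = s = ε/2 and ε·K_ε'(1+δ) → 0. -/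
open Set Filter MeasureTheory intervalIntegral

lemma cont_g' {H : ℝ → ℝ} (hH : ContDiffOn ℝ 2 H (Set.Ici 0)) :
    ContinuousOn (deriv (deriv H)) (Set.Ioi 0) := by
  have h1 : ContDiffOn ℝ 2 H (Set.Ioi 0) := hH.mono Set.Ioi_subset_Ici_self
  have h2 : ContDiffOn ℝ 1 (deriv H) (Set.Ioi 0) :=
    h1.deriv_of_isOpen isOpen_Ioi (m := 1) (by norm_num)
  exact h2.continuousOn_deriv_of_isOpen isOpen_Ioi le_rfl

lemma key_lemma (g : ℝ → ℝ) (hg : ContinuousOn g (Set.Ioi 0))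
    (h0 : Tendsto (fun ε : ℝ => ε * g ε) (nhdsWithin 0 (Set.Ioi 0)) (nhds 0)) :
    Tendsto (fun ε : ℝ => ε * ∫ t in (ε / 2)..1, g t / (t + ε))
      (nhdsWithin 0 (Set.Ioi 0)) (nhds 0) := by
  rw [NormedAddCommGroup.tendsto_nhds_zero]
  intro δ hδ
  rw [Metric.tendsto_nhdsWithin_nhds] at h0
  obtain ⟨r0, hr0, hsmall⟩ := h0 (δ/8) (by positivity)
  set r : ℝ := min (r0/2) (1/2) with hr
  have hrpos : 0 < r := by positivity
  have hr1 : r ≤ 1/2 := min_le_right _ _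
  have hsm : ∀ t : ℝ, 0 < t → t ≤ r → |g t| ≤ δ/8 * t⁻¹ := by
    intro t ht htr
    have h1 : dist t 0 < r0 := by
      rw [Real.dist_eq, sub_zero, abs_of_pos ht]
      calc t ≤ r := htr
        _ ≤ r0/2 := min_le_left _ _
        _ < r0 := by linarith
    have h2 := hsmall ht h1
    rw [Real.dist_eq, sub_zero, abs_mul, abs_of_pos ht] at h2
    calc |g t| = (t * |g t|) * t⁻¹ := by field_simp
      _ ≤ (δ/8) * t⁻¹ := mul_le_mul_of_nonneg_right h2.le (by positivity)
  obtain ⟨M, hM⟩ := (isCompact_Icc (a := r) (b := 1)).exists_bound_of_continuousOn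
    (hg.mono (fun x hx => lt_of_lt_of_le hrpos hx.1))
  have hM0 : 0 ≤ M := le_trans (abs_nonneg _) (hM r ⟨le_refl r, by linarith⟩)
  set ε₀ : ℝ := min r (δ * r / (4 * (M + 1))) with hε₀
  have hε₀pos : 0 < ε₀ := lt_min hrpos (by positivity)
  filter_upwards [Ioo_mem_nhdsGT_of_mem (Set.mem_Ico.mpr ⟨le_refl (0:ℝ), hε₀pos⟩)]
  intro ε hε
  obtain ⟨hε1, hε2⟩ := hε
  have hεr : ε < r := lt_of_lt_of_le hε2 (min_le_left _ _)
  have hεM : ε < δ * r / (4 * (M + 1)) := lt_of_lt_of_le hε2 (min_le_right _ _)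
  have hhalf : ε/2 ≤ r := by linarith
  have hhalf0 : 0 < ε/2 := by linarith
  set f : ℝ → ℝ := fun t => g t / (t + ε) with hf
  have hcontf : ContinuousOn f { t : ℝ | 0 < t } := by
    apply ContinuousOn.div (hg.mono (fun x hx => hx))
    · exact (continuous_id.add continuous_const).continuousOn
    · intro x hx
      have hx' : 0 < x := hx
      positivity
  have hint1 : IntervalIntegrable f volume (ε/2) r := by
    apply ContinuousOn.intervalIntegrable
    apply hcontf.mono
    intro x hx
    rw [Set.uIcc_of_le hhalf] at hx
    exact lt_of_lt_of_le hhalf0 hx.1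
  have hint2 : IntervalIntegrable f volume r 1 := by
    apply ContinuousOn.intervalIntegrable
    apply hcontf.mono
    intro x hx
    rw [Set.uIcc_of_le (by linarith : r ≤ 1)] at hx
    exact lt_of_lt_of_le hrpos hx.1
  have hsplit : (∫ t in (ε/2)..r, f t) + (∫ t in r..1, f t) = ∫ t in (ε/2)..1, f t :=
    integral_add_adjacent_intervals hint1 hint2
  -- bound A
  have hboundA : ‖∫ t in (ε/2)..r, f t‖ ≤ δ/8 * (2/ε) := by
    have hb : ∀ᵐ t ∂(volume.restrict (Set.uIoc (ε/2) r)), ‖f t‖ ≤ δ/8 * (t^2)⁻¹ := by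
      rw [Set.uIoc_of_le hhalf]
      filter_upwards [ae_restrict_mem measurableSet_Ioc]
      intro t ht
      have ht0 : 0 < t := lt_trans hhalf0 ht.1
      have htr : t ≤ r := ht.2
      rw [hf, Real.norm_eq_abs, abs_div, abs_of_pos (by linarith : (0:ℝ) < t + ε)]
      calc |g t| / (t + ε) ≤ (δ/8 * t⁻¹) / t :=
            div_le_div₀ (by positivity) (hsm t ht0 htr) ht0 (by linarith)
        _ = δ/8 * (t^2)⁻¹ := by rw [sq, mul_inv, div_eq_mul_inv, mul_assoc]
    have hbint : IntervalIntegrable (fun t => δ/8 * (t^2)⁻¹) volume (ε/2) r := by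
      apply ContinuousOn.intervalIntegrable
      apply ContinuousOn.mul continuousOn_const
      apply ContinuousOn.inv₀ (continuousOn_pow 2)
      intro x hx
      rw [Set.uIcc_of_le hhalf] at hx
      have : 0 < x := lt_of_lt_of_le hhalf0 hx.1
      positivity
    refine ((intervalIntegral.norm_integral_le_of_norm_le hhalf
      (by rw [Set.uIoc_of_le hhalf] at hb; exact (ae_restrict_iff' measurableSet_Ioc).mp hb)
      hbint).trans (le_abs_self _)).trans ?_
    have hval : (∫ t in (ε/2)..r, (t^2)⁻¹) = -r⁻¹ - -(ε/2)⁻¹ := by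
      apply integral_eq_sub_of_hasDerivAt (f := fun t : ℝ => -t⁻¹)
        (f' := fun t : ℝ => (t^2)⁻¹)
      · intro t ht
        rw [Set.uIcc_of_le hhalf] at ht
        have ht0 : t ≠ 0 := ne_of_gt (lt_of_lt_of_le hhalf0 ht.1)
        have := (hasDerivAt_inv ht0).neg; simp only [neg_neg] at this; exact this
      · apply ContinuousOn.intervalIntegrable
        apply ContinuousOn.inv₀ (continuousOn_pow 2)
        intro x hx
        rw [Set.uIcc_of_le hhalf] at hx
        have : 0 < x := lt_of_lt_of_le hhalf0 hx.1
        positivity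
    have hcomp : (∫ t in (ε/2)..r, δ/8 * (t^2)⁻¹) = δ/8 * ((ε/2)⁻¹ - r⁻¹) := by
      rw [intervalIntegral.integral_const_mul, hval]; ring
    rw [hcomp]
    have hle : (ε/2)⁻¹ - r⁻¹ ≤ 2/ε := by
      have h1 : ((ε/2):ℝ)⁻¹ = 2/ε := by field_simp
      have h2 : (0:ℝ) ≤ r⁻¹ := by positivity
      linarith
    have hnn : (0:ℝ) ≤ (ε/2)⁻¹ - r⁻¹ := by
      have : r⁻¹ ≤ (ε/2)⁻¹ := by
        apply inv_anti₀ hhalf0 hhalf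
      linarith
    rw [abs_of_nonneg (by positivity : (0:ℝ) ≤ δ/8 * ((ε/2)⁻¹ - r⁻¹))]
    exact mul_le_mul_of_nonneg_left hle (by positivity)
  -- bound B
  have hboundB : ‖∫ t in r..1, f t‖ ≤ M / r := by
    have h1 : ‖∫ t in r..1, f t‖ ≤ (M/r) * |1 - r| := by
      apply intervalIntegral.norm_integral_le_of_norm_le_const
      intro t ht
      rw [Set.uIoc_of_le (by linarith : r ≤ 1)] at ht
      rw [hf, Real.norm_eq_abs, abs_div,
        abs_of_pos (by linarith [ht.1] : (0:ℝ) < t + ε)]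
      apply div_le_div₀ hM0 (hM t ⟨le_of_lt ht.1, ht.2⟩) hrpos
      linarith [ht.1]
    refine h1.trans ?_
    rw [abs_of_nonneg (by linarith : (0:ℝ) ≤ 1 - r)]
    have : M/r * (1 - r) ≤ M/r * 1 := by
      apply mul_le_mul_of_nonneg_left (by linarith) (by positivity)
    linarith
  -- combine
  rw [Real.norm_eq_abs, abs_mul, abs_of_pos hε1, ← hsplit]
  have hεMr : ε * M / r < δ/4 := by
    rw [div_lt_iff₀ hrpos]
    rw [lt_div_iff₀ (by positivity : (0:ℝ) < 4 * (M+1))] at hεM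
    nlinarith
  calc ε * |(∫ t in (ε/2)..r, f t) + (∫ t in r..1, f t)|
      ≤ ε * (δ/8 * (2/ε) + M/r) := by
        refine mul_le_mul_of_nonneg_left ?_ hε1.le
        exact (abs_add_le _ _).trans (add_le_add hboundA hboundB)
    _ = δ/4 + ε * M / r := by field_simp; ring
    _ < δ/4 + δ/4 := by linarith
    _ < δ := by linarith

theorem regularised_flow_interchange_limit
    (H : ℝ → ℝ) (hH : ContDiffOn ℝ 2 H (Set.Ici 0))
    (h0 : Filter.Tendsto (fun ε : ℝ => ε * deriv (deriv H) ε)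
      (nhdsWithin 0 (Set.Ioi 0)) (nhds 0))
    (c : ℝ → ℝ)
    (hc : Filter.Tendsto (fun ε : ℝ => ε * c ε)
      (nhdsWithin 0 (Set.Ioi 0)) (nhds 0)) :
    Filter.Tendsto
      (fun ε : ℝ => ε * |c ε + ∫ t in (ε / 2)..1, deriv (deriv H) t / (t + ε)|)
      (nhdsWithin 0 (Set.Ioi 0)) (nhds 0) := by
  have key := key_lemma (deriv (deriv H)) (cont_g' hH) h0
  have hsum : Tendsto
      (fun ε : ℝ => ε * c ε + ε * ∫ t in (ε / 2)..1, deriv (deriv H) t / (t + ε))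
      (nhdsWithin 0 (Set.Ioi 0)) (nhds 0) := by
    simpa using hc.add key
  have habs : Tendsto
      (fun ε : ℝ => |ε * c ε + ε * ∫ t in (ε / 2)..1, deriv (deriv H) t / (t + ε)|)
      (nhdsWithin 0 (Set.Ioi 0)) (nhds 0) := by
    simpa using hsum.abs
  apply habs.congr'
  filter_upwards [eventually_mem_nhdsWithin] with ε (hε : ε ∈ Set.Ioi 0)
  rw [← mul_add, abs_mul, abs_of_pos hε]
end
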